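/- If an arc of a continuous curve is contained in a cone of angle α ∈ (0, 2π) with vertex z (and avoids z), then its winding number with respect to z satisfies Wnd(z,γ;t₁,t₂) ∈ [−α, α]. -/

import Mathlib

open Set

/-- `θ` is a continuous lift of the argument of `γ(·) − z` over `[s,t]`. -/
def IsArgLift (z : ℂ) (γ : ℝ → ℂ) (s t : ℝ) (θ : ℝ → ℝ) : Prop :=
  ContinuousOn θ (Set.Icc s t) ∧
    ∀ u ∈ Set.Icc s t,
      γ u - z = ((‖γ u - z‖ : ℝ) : ℂ) * Complex.exp ((θ u : ℂ) * Complex.I)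

lemma gap_lemma (α θ₀ : ℝ) (hα₀ : 0 < α) (hα : α < 2 * Real.pi)
    (S : Set ℝ) (hconn : IsPreconnected S)
    (hkey : ∀ x ∈ S, ∃ k : ℤ, x ∈ Set.Icc (θ₀ + 2 * Real.pi * k) (θ₀ + α + 2 * Real.pi * k))
    (a b : ℝ) (ha : a ∈ S) (hb : b ∈ S) (k k' : ℤ)
    (hak : a ∈ Set.Icc (θ₀ + 2 * Real.pi * k) (θ₀ + α + 2 * Real.pi * k))
    (hbk : b ∈ Set.Icc (θ₀ + 2 * Real.pi * k') (θ₀ + α + 2 * Real.pi * k'))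
    (hkk : k < k') : False := by
  have hπ := Real.pi_pos
  have hk1 : (k : ℝ) + 1 ≤ (k' : ℝ) := by exact_mod_cast hkk
  have hk1' : 2 * Real.pi * ((k : ℝ) + 1) ≤ 2 * Real.pi * (k' : ℝ) :=
    mul_le_mul_of_nonneg_left hk1 (by positivity)
  have hac : a ≤ θ₀ + 2 * Real.pi * k + Real.pi + α / 2 := by
    have := hak.2; linarith
  have hcb : θ₀ + 2 * Real.pi * k + Real.pi + α / 2 ≤ b := by
    have := hbk.1; nlinarith
  have hcS : θ₀ + 2 * Real.pi * k + Real.pi + α / 2 ∈ S :=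
    hconn.Icc_subset ha hb ⟨hac, hcb⟩
  obtain ⟨m, hm1, hm2⟩ := hkey _ hcS
  have hkm : k < m := by
    by_contra h'
    push_neg at h'
    have h'' : (m : ℝ) ≤ (k : ℝ) := by exact_mod_cast h'
    have : 2 * Real.pi * (m : ℝ) ≤ 2 * Real.pi * (k : ℝ) :=
      mul_le_mul_of_nonneg_left h'' (by positivity)
    linarith
  have hkm' : (k : ℝ) + 1 ≤ (m : ℝ) := by exact_mod_cast hkm
  have : 2 * Real.pi * ((k : ℝ) + 1) ≤ 2 * Real.pi * (m : ℝ) :=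
    mul_le_mul_of_nonneg_left hkm' (by positivity)
  linarith

/-- If an arc of a continuous curve is contained in a cone of angle `α ∈ (0,2π)` with
vertex `z` (and avoids `z`), then its winding number with respect to `z` lies in `[−α,α]`. -/
theorem winding_in_cone (t₁ t₂ : ℝ) (ht : t₁ ≤ t₂) (γ : ℝ → ℂ) (z : ℂ)
    (hγ : ContinuousOn γ (Set.Icc t₁ t₂))
    (α θ₀ : ℝ) (hα₀ : 0 < α) (hα : α < 2 * Real.pi)
    (hcone : ∀ t ∈ Set.Icc t₁ t₂, ∃ r > (0 : ℝ), ∃ φ ∈ Set.Icc θ₀ (θ₀ + α),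
      γ t = z + (r : ℂ) * Complex.exp ((φ : ℂ) * Complex.I)) :
    ∀ θ : ℝ → ℝ, IsArgLift z γ t₁ t₂ θ → θ t₂ - θ t₁ ∈ Set.Icc (-α) α := by
  intro θ hlift
  obtain ⟨hθc, hθ⟩ := hlift
  have key : ∀ u ∈ Set.Icc t₁ t₂, ∃ k : ℤ,
      θ u ∈ Set.Icc (θ₀ + 2 * Real.pi * k) (θ₀ + α + 2 * Real.pi * k) := by
    intro u hu
    obtain ⟨r, hr, φ, hφ, hγu⟩ := hcone u hu
    have h1 := hθ u hu
    have hsub : γ u - z = (r : ℂ) * Complex.exp ((φ : ℂ) * Complex.I) := by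
      rw [hγu]; ring
    have habs : (‖γ u - z‖ : ℝ) = r := by
      rw [hsub]
      simp [Complex.norm_exp, abs_of_pos hr]
    rw [habs, hsub] at h1
    have hrC : (r : ℂ) ≠ 0 := by exact_mod_cast hr.ne'
    have hexp : Complex.exp ((φ : ℂ) * Complex.I) = Complex.exp ((θ u : ℂ) * Complex.I) :=
      mul_left_cancel₀ hrC h1
    obtain ⟨n, hn⟩ := Complex.exp_eq_exp_iff_exists_int.mp hexp
    have hφθ : (φ : ℂ) = (θ u : ℂ) + n * (2 * Real.pi) := by
      have : (φ : ℂ) * Complex.I = ((θ u : ℂ) + n * (2 * Real.pi)) * Complex.I := by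
        rw [hn]; ring
      exact mul_right_cancel₀ Complex.I_ne_zero this
    have hφθ' : φ = θ u + n * (2 * Real.pi) := by
      exact_mod_cast hφθ
    refine ⟨-n, ?_, ?_⟩
    · push_cast
      have := hφ.1
      rw [hφθ'] at this
      linarith
    · push_cast
      have := hφ.2
      rw [hφθ'] at this
      linarith
  have ht₁ : t₁ ∈ Set.Icc t₁ t₂ := ⟨le_refl _, ht⟩
  have ht₂ : t₂ ∈ Set.Icc t₁ t₂ := ⟨ht, le_refl _⟩
  obtain ⟨k₁, hk₁⟩ := key t₁ ht₁
  obtain ⟨k₂, hk₂⟩ := key t₂ ht₂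
  have hconn : IsPreconnected (θ '' Set.Icc t₁ t₂) := isPreconnected_Icc.image θ hθc
  have hkey' : ∀ x ∈ θ '' Set.Icc t₁ t₂, ∃ k : ℤ,
      x ∈ Set.Icc (θ₀ + 2 * Real.pi * k) (θ₀ + α + 2 * Real.pi * k) := by
    rintro x ⟨u, hu, rfl⟩; exact key u hu
  have hmem₁ : θ t₁ ∈ θ '' Set.Icc t₁ t₂ := ⟨t₁, ht₁, rfl⟩
  have hmem₂ : θ t₂ ∈ θ '' Set.Icc t₁ t₂ := ⟨t₂, ht₂, rfl⟩
  have hkk : k₁ = k₂ := by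
    rcases lt_trichotomy k₁ k₂ with h | h | h
    · exact absurd (gap_lemma α θ₀ hα₀ hα _ hconn hkey' _ _ hmem₁ hmem₂ k₁ k₂ hk₁ hk₂ h) (by simp)
    · exact h
    · exact absurd (gap_lemma α θ₀ hα₀ hα _ hconn hkey' _ _ hmem₂ hmem₁ k₂ k₁ hk₂ hk₁ h) (by simp)
  subst hkk
  constructor
  · have := hk₁.2; have := hk₂.1; linarith
  · have := hk₁.1; have := hk₂.2; linarith
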